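/- Suppose λ̄ ≥ 24‖E‖ and set δ := max{ 12·r·x, 144·r·w²/λ̄ }. Then λ̃_1 − λ_1 ≤ δ/2 = max{ 6·r·x, 72·r·w²/λ̄ }. -/

import Mathlib

open Matrix

/-- Spectral (ℓ²-operator) norm of a real matrix. -/
noncomputable def matOpNorm {m n : ℕ} (M : Matrix (Fin m) (Fin n) ℝ) : ℝ :=
  ‖LinearMap.toContinuousLinearMap (Matrix.toEuclideanLin M)‖

/-- Euclidean norm of a vector. -/
noncomputable def vecNorm {n : ℕ} (v : Fin n → ℝ) : ℝ := Real.sqrt (v ⬝ᵥ v)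

lemma dot_self_nonneg' {n : ℕ} (v : Fin n → ℝ) : 0 ≤ v ⬝ᵥ v :=
  Finset.sum_nonneg fun _ _ => mul_self_nonneg _
lemma vecNorm_nonneg' {n : ℕ} (v : Fin n → ℝ) : 0 ≤ vecNorm v := Real.sqrt_nonneg _
lemma vecNorm_sq' {n : ℕ} (v : Fin n → ℝ) : vecNorm v ^ 2 = v ⬝ᵥ v :=
  Real.sq_sqrt (dot_self_nonneg' v)
lemma abs_dot_le' {n : ℕ} (a b : Fin n → ℝ) : |a ⬝ᵥ b| ≤ vecNorm a * vecNorm b := by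
  have h := Finset.sum_mul_sq_le_sq_mul_sq Finset.univ a b
  rw [← Real.sqrt_sq_eq_abs, vecNorm, vecNorm, ← Real.sqrt_mul (dot_self_nonneg' a)]
  exact Real.sqrt_le_sqrt (by simpa [dotProduct, sq] using h)
lemma euclid_norm_eq {n : ℕ} (v : Fin n → ℝ) :
    ‖(WithLp.equiv 2 (Fin n → ℝ)).symm v‖ = vecNorm v := by
  rw [EuclideanSpace.norm_eq, vecNorm]
  congr 1
  simp [dotProduct, sq, Real.norm_eq_abs, abs_mul_abs_self]
lemma vecNorm_mulVec_le' {m n : ℕ} (M : Matrix (Fin m) (Fin n) ℝ) (v : Fin n → ℝ) :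
    vecNorm (M *ᵥ v) ≤ matOpNorm M * vecNorm v := by
  have h := (LinearMap.toContinuousLinearMap (Matrix.toEuclideanLin M)).le_opNorm
    ((WithLp.equiv 2 (Fin n → ℝ)).symm v)
  have e1 : ‖WithLp.toLp 2 (M *ᵥ v)‖ = vecNorm (M *ᵥ v) := euclid_norm_eq _
  have e2 : ‖WithLp.toLp 2 v‖ = vecNorm v := euclid_norm_eq _
  simpa [e1, e2, matOpNorm] using h
lemma symdot {n : ℕ} (M : Matrix (Fin n) (Fin n) ℝ) (hM : M.IsSymm) (a b : Fin n → ℝ) :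
    a ⬝ᵥ (M *ᵥ b) = b ⬝ᵥ (M *ᵥ a) := by
  rw [Matrix.dotProduct_mulVec]
  conv_lhs => rw [← hM]
  rw [Matrix.vecMul_transpose, dotProduct_comm]

lemma final_arith (tl l0 x T w tq EN sig s lb M rr : ℝ)
    (hlb : 0 < lb) (hx0 : 0 ≤ x) (hw0 : 0 ≤ w) (hT0 : 0 ≤ T) (htq0 : 0 ≤ tq)
    (hsig0 : 0 ≤ sig) (hs0 : 0 ≤ s) (hEN0 : 0 ≤ EN) (hEN : EN ≤ lb / 24)
    (hr0 : 0 ≤ rr) (hM0 : 0 ≤ M)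
    (hmain : tl - l0 ≤ x * T ^ 2 + 2 * (T * (w * tq)) + EN * sig - lb * sig)
    (htq2 : tq ^ 2 = sig) (hT2 : T ^ 2 ≤ rr * s) (hssig : s + sig = 1)
    (hxM : 6 * rr * x ≤ M) (hwM : 72 * rr * w ^ 2 ≤ M * lb) :
    tl - l0 ≤ M := by
  have hmainlam := mul_le_mul_of_nonneg_right hmain hlb.le
  have step1 : x * T ^ 2 ≤ x * rr := by
    nlinarith [mul_le_mul_of_nonneg_left hT2 hx0, mul_nonneg (mul_nonneg hx0 hr0) hsig0]
  have A1 : x * T ^ 2 * lb ≤ M * lb / 6 := by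
    nlinarith [mul_le_mul_of_nonneg_right step1 hlb.le,
      mul_le_mul_of_nonneg_right hxM hlb.le]
  have step3 : (T * w) ^ 2 ≤ rr * w ^ 2 := by
    nlinarith [mul_le_mul_of_nonneg_right hT2 (sq_nonneg w),
      mul_nonneg (mul_nonneg hr0 (sq_nonneg w)) hsig0]
  have A2 : 2 * (T * (w * tq)) * lb ≤ (24/23) * (rr * w ^ 2)
      + (23/24) * lb ^ 2 * sig := by
    nlinarith [sq_nonneg (T * w - (23/24) * lb * tq), step3, htq2]
  have A3 : EN * sig * lb ≤ lb ^ 2 * sig / 24 := by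
    nlinarith [mul_le_mul_of_nonneg_right (mul_le_mul_of_nonneg_right hEN hsig0) hlb.le]
  have A4 : (24/23) * (rr * w ^ 2) ≤ M * lb / 69 := by linarith
  have hMl0 : 0 ≤ M * lb := mul_nonneg hM0 hlb.le
  have hgoal : (tl - l0) * lb ≤ M * lb := by linarith only [hmainlam, A1, A2, A3, A4, hMl0]
  exact le_of_mul_le_mul_right hgoal hlb

set_option maxHeartbeats 1000000 in
/-- Corollary 4.7: upper perturbation bound for the largest eigenvalue. -/
theorem largest_eigenvalue_upper_perturbation
    {n : ℕ} (hn : 1 ≤ n) (A E : Matrix (Fin n) (Fin n) ℝ)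
    (hA : A.IsSymm) (hE : E.IsSymm)
    (lam tlam : Fin n → ℝ) (u tu : Fin n → (Fin n → ℝ))
    (hlam : Antitone lam) (htlam : Antitone tlam)
    (hu : ∀ i j, u i ⬝ᵥ u j = if i = j then (1 : ℝ) else 0)
    (htu : ∀ i j, tu i ⬝ᵥ tu j = if i = j then (1 : ℝ) else 0)
    (hAu : ∀ i, A *ᵥ u i = lam i • u i)
    (hAtu : ∀ i, (A + E) *ᵥ tu i = tlam i • tu i)
    (lambar : ℝ) (hlambar : 0 < lambar)
    (hlambarE : 24 * matOpNorm E ≤ lambar)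
    -- r = max{ i : λ_1 − λ_i ≤ λ̄ } :
    (r : ℕ) (hrn : r ≤ n)
    (hrchar : ∀ i : Fin n, (i : ℕ) < r ↔ lam ⟨0, by omega⟩ - lam i ≤ lambar)
    (x w : ℝ)
    (hx : IsLUB (insert (0 : ℝ)
      {t | ∃ i j : Fin n, (i : ℕ) < r ∧ (j : ℕ) < r ∧ t = |u i ⬝ᵥ (E *ᵥ u j)|}) x)
    (hw : IsLUB (insert (0 : ℝ)
      {t | ∃ i : Fin n, (i : ℕ) < r ∧ t = vecNorm (E *ᵥ u i)}) w) :
    tlam ⟨0, by omega⟩ - lam ⟨0, by omega⟩ ≤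
      max (6 * r * x) (72 * r * w ^ 2 / lambar) := by
  set i0 : Fin n := ⟨0, by omega⟩ with hi0
  set M : ℝ := max (6 * r * x) (72 * r * w ^ 2 / lambar) with hM
  -- basic nonnegativity facts
  have hx0 : 0 ≤ x := hx.1 (Set.mem_insert _ _)
  have hw0 : 0 ≤ w := hw.1 (Set.mem_insert _ _)
  have hxub : ∀ i j : Fin n, (i : ℕ) < r → (j : ℕ) < r → |u i ⬝ᵥ (E *ᵥ u j)| ≤ x :=
    fun i j hi hj => hx.1 (Set.mem_insert_iff.mpr (Or.inr ⟨i, j, hi, hj, rfl⟩))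
  have hwub : ∀ i : Fin n, (i : ℕ) < r → vecNorm (E *ᵥ u i) ≤ w :=
    fun i hi => hw.1 (Set.mem_insert_iff.mpr (Or.inr ⟨i, hi, rfl⟩))
  have hr0 : (0:ℝ) ≤ (r:ℝ) := Nat.cast_nonneg r
  have hxM : 6 * (r:ℝ) * x ≤ M := le_max_left _ _
  have hwM : 72 * (r:ℝ) * w ^ 2 ≤ M * lambar := by
    have := le_max_right (6 * (r:ℝ) * x) (72 * r * w ^ 2 / lambar)
    rw [div_le_iff₀ hlambar] at this
    linarith
  have hM0 : 0 ≤ M := le_trans (by positivity) hxM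
  have hE0 : 0 ≤ matOpNorm E := norm_nonneg _
  -- the orthogonal matrix U with rows u i
  set U : Matrix (Fin n) (Fin n) ℝ := Matrix.of u with hU
  have hUUt : U * Uᵀ = 1 := by
    ext i j
    have h := hu i j
    simp only [Matrix.mul_apply, Matrix.transpose_apply, Matrix.one_apply, hU, Matrix.of_apply]
    simpa [dotProduct] using h
  have hUtU : Uᵀ * U = 1 := mul_eq_one_comm.mp hUUt
  have hUz : ∀ (z : Fin n → ℝ) (i : Fin n), (U *ᵥ z) i = u i ⬝ᵥ z := fun z i => rfl
  have hvmU : ∀ a : Fin n → ℝ, Uᵀ *ᵥ a = a ᵥ* U := by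
    intro a
    rw [← Matrix.transpose_transpose U, Matrix.vecMul_transpose, Matrix.transpose_transpose]
  have hdotsum : ∀ a z : Fin n → ℝ, (Uᵀ *ᵥ a) ⬝ᵥ z = ∑ i, a i * (u i ⬝ᵥ z) := by
    intro a z
    rw [hvmU, ← Matrix.dotProduct_mulVec]
    simp only [dotProduct, hUz]
  have hiso : ∀ a b : Fin n → ℝ, (Uᵀ *ᵥ a) ⬝ᵥ (Uᵀ *ᵥ b) = a ⬝ᵥ b := by
    intro a b
    rw [Matrix.dotProduct_mulVec, Matrix.vecMul_transpose, Matrix.mulVec_mulVec,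
      hUUt, Matrix.one_mulVec]
  -- coefficient vector of v = tu i0
  set v : Fin n → ℝ := tu i0 with hv
  have hvv : v ⬝ᵥ v = 1 := by simpa using htu i0 i0
  set c : Fin n → ℝ := fun i => u i ⬝ᵥ v with hc
  have hcU : U *ᵥ v = c := by ext i; exact hUz v i
  have hvc : Uᵀ *ᵥ c = v := by
    rw [← hcU, Matrix.mulVec_mulVec, hUtU, Matrix.one_mulVec]
  have hcc : c ⬝ᵥ c = 1 := by rw [← hiso c c, hvc, hvv]
  -- split coefficients
  classical
  set R : Finset (Fin n) := Finset.univ.filter (fun i : Fin n => (i : ℕ) < r) with hR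
  set cR : Fin n → ℝ := fun i => if (i : ℕ) < r then c i else 0 with hcR
  set cQ : Fin n → ℝ := fun i => if (i : ℕ) < r then 0 else c i with hcQ
  have hcsplit : c = cR + cQ := by
    funext i; by_cases h : (i : ℕ) < r <;> simp [hcR, hcQ, h]
  set s : ℝ := ∑ i ∈ R, c i ^ 2 with hs
  set sig : ℝ := ∑ i ∈ Finset.univ.filter (fun i : Fin n => ¬ (i : ℕ) < r), c i ^ 2 with hsig
  have hs0 : 0 ≤ s := Finset.sum_nonneg fun i _ => sq_nonneg _
  have hsig0 : 0 ≤ sig := Finset.sum_nonneg fun i _ => sq_nonneg _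
  have hssig : s + sig = 1 := by
    rw [hs, hsig, Finset.sum_filter_add_sum_filter_not]
    have : ∑ i, c i ^ 2 = c ⬝ᵥ c := by simp [dotProduct, sq]
    rw [this, hcc]
  -- p and q
  set p : Fin n → ℝ := Uᵀ *ᵥ cR with hp
  set q : Fin n → ℝ := Uᵀ *ᵥ cQ with hq
  have hvpq : v = p + q := by
    rw [hp, hq, ← Matrix.mulVec_add, ← hcsplit, hvc]
  set tq : ℝ := vecNorm q with htq
  have htq0 : 0 ≤ tq := vecNorm_nonneg' q
  have htq2 : tq ^ 2 = sig := by
    rw [htq, vecNorm_sq', hq, hiso]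
    rw [hsig]
    rw [show (cQ ⬝ᵥ cQ) = ∑ i : Fin n, (if (i:ℕ) < r then 0 else c i ^ 2) from by
      simp only [dotProduct, hcQ]; exact Finset.sum_congr rfl fun i _ => by split <;> ring]
    rw [Finset.sum_ite, Finset.sum_const_zero, zero_add]
  -- T = sum of |c i| over R
  set T : ℝ := ∑ i ∈ R, |c i| with hT
  have hT0 : 0 ≤ T := Finset.sum_nonneg fun i _ => abs_nonneg _
  have hTabs : ∑ i, |cR i| = T := by
    rw [hT, show (∑ i, |cR i|) = ∑ i : Fin n, (if (i:ℕ) < r then |c i| else 0) from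
      Finset.sum_congr rfl fun i _ => by simp only [hcR]; split <;> simp]
    rw [Finset.sum_ite, Finset.sum_const_zero, add_zero]
  have hRcard : (R.card : ℝ) ≤ (r : ℝ) := by
    have : R.card ≤ (Finset.range r).card := by
      apply Finset.card_le_card_of_injOn (fun i : Fin n => (i : ℕ))
      · intro a ha
        have ha' : (a : ℕ) < r := by simpa [hR] using ha
        exact Finset.mem_range.mpr ha'
      · intro a _ b _ h; exact Fin.ext h
    rw [Finset.card_range] at this
    exact_mod_cast this
  have hT2 : T ^ 2 ≤ (r : ℝ) * s := by
    have h1 : T ^ 2 ≤ (R.card : ℝ) * ∑ i ∈ R, |c i| ^ 2 := by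
      have := sq_sum_le_card_mul_sum_sq (s := R) (f := fun i => |c i|)
      simpa using this
    have h2 : ∑ i ∈ R, |c i| ^ 2 = s := by
      rw [hs]; exact Finset.sum_congr rfl fun i _ => sq_abs _
    rw [h2] at h1
    exact h1.trans (mul_le_mul_of_nonneg_right hRcard hs0)
  -- eigendecomposition of quadratic forms
  have hsymA := symdot A hA
  have hsymE := symdot E hE
  have hAquad : v ⬝ᵥ (A *ᵥ v) = ∑ i, lam i * c i ^ 2 := by
    have h0 : v ⬝ᵥ (A *ᵥ v) = (Uᵀ *ᵥ c) ⬝ᵥ (A *ᵥ v) := by rw [hvc]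
    rw [h0, hdotsum]
    refine Finset.sum_congr rfl fun i _ => ?_
    rw [hsymA (u i) v, hAu i, dotProduct_smul]
    have : v ⬝ᵥ u i = c i := by rw [hc]; exact dotProduct_comm v (u i)
    rw [this, smul_eq_mul]; ring
  -- bound on A part
  have hlamle : ∀ i : Fin n, lam i ≤ lam i0 := fun i => hlam (by
    simp [hi0, Fin.le_def])
  have hApart : v ⬝ᵥ (A *ᵥ v) ≤ lam i0 - lambar * sig := by
    rw [hAquad, ← Finset.sum_filter_add_sum_filter_not Finset.univ
      (fun i : Fin n => (i : ℕ) < r)]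
    have h1 : ∑ i ∈ R, lam i * c i ^ 2 ≤ lam i0 * s := by
      rw [hs, Finset.mul_sum]
      exact Finset.sum_le_sum fun i _ => mul_le_mul_of_nonneg_right (hlamle i) (sq_nonneg _)
    have h2 : ∑ i ∈ Finset.univ.filter (fun i : Fin n => ¬ (i : ℕ) < r), lam i * c i ^ 2 ≤
        (lam i0 - lambar) * sig := by
      rw [hsig, Finset.mul_sum]
      refine Finset.sum_le_sum fun i hi => ?_
      rw [Finset.mem_filter] at hi
      have : ¬ (lam i0 - lam i ≤ lambar) := fun h => hi.2 ((hrchar i).mpr h)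
      exact mul_le_mul_of_nonneg_right (by linarith) (sq_nonneg _)
    have : lam i0 * s + (lam i0 - lambar) * sig = lam i0 - lambar * sig := by
      linear_combination lam i0 * hssig
    linarith
  -- value of tlam i0
  have htlval : tlam i0 = v ⬝ᵥ (A *ᵥ v) + v ⬝ᵥ (E *ᵥ v) := by
    have h1 : v ⬝ᵥ ((A + E) *ᵥ v) = tlam i0 := by
      rw [hv, hAtu i0, dotProduct_smul, smul_eq_mul, ← hv, hvv, mul_one]
    rw [← h1, Matrix.add_mulVec, dotProduct_add]
  -- E quadratic form bounds
  have hppE : p ⬝ᵥ (E *ᵥ p) ≤ x * T ^ 2 := by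
    rw [hp, hdotsum]
    have hub : ∀ i : Fin n, cR i * (u i ⬝ᵥ (E *ᵥ Uᵀ *ᵥ cR)) ≤ |cR i| * (T * x) := by
      intro i
      by_cases hi : (i : ℕ) < r
      · have hexp : u i ⬝ᵥ (E *ᵥ Uᵀ *ᵥ cR) = ∑ j, cR j * (u i ⬝ᵥ (E *ᵥ u j)) := by
          rw [hsymE (u i), hdotsum]
          exact Finset.sum_congr rfl fun j _ => by rw [hsymE (u j) (u i)]
        have habs : |u i ⬝ᵥ (E *ᵥ Uᵀ *ᵥ cR)| ≤ T * x := by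
          rw [hexp]
          calc |∑ j, cR j * (u i ⬝ᵥ (E *ᵥ u j))| ≤ ∑ j, |cR j * (u i ⬝ᵥ (E *ᵥ u j))| :=
                Finset.abs_sum_le_sum_abs _ _
            _ ≤ ∑ j, |cR j| * x := by
                refine Finset.sum_le_sum fun j _ => ?_
                rw [abs_mul]
                by_cases hj : (j : ℕ) < r
                · exact mul_le_mul_of_nonneg_left (hxub i j hi hj) (abs_nonneg _)
                · simp [hcR, hj]
            _ = T * x := by rw [← Finset.sum_mul, hTabs]
        calc cR i * (u i ⬝ᵥ (E *ᵥ Uᵀ *ᵥ cR)) ≤ |cR i * (u i ⬝ᵥ (E *ᵥ Uᵀ *ᵥ cR))| := le_abs_self _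
          _ = |cR i| * |u i ⬝ᵥ (E *ᵥ Uᵀ *ᵥ cR)| := abs_mul _ _
          _ ≤ |cR i| * (T * x) := mul_le_mul_of_nonneg_left habs (abs_nonneg _)
      · simp [hcR, if_neg hi]
    calc ∑ i, cR i * (u i ⬝ᵥ (E *ᵥ Uᵀ *ᵥ cR)) ≤ ∑ i, |cR i| * (T * x) :=
          Finset.sum_le_sum fun i _ => hub i
      _ = T * (T * x) := by rw [← Finset.sum_mul, hTabs]
      _ = x * T ^ 2 := by ring
  have hpqE : p ⬝ᵥ (E *ᵥ q) ≤ T * (w * tq) := by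
    rw [hp, hdotsum]
    have hub : ∀ i : Fin n, cR i * (u i ⬝ᵥ (E *ᵥ q)) ≤ |cR i| * (w * tq) := by
      intro i
      by_cases hi : (i : ℕ) < r
      · have habs : |u i ⬝ᵥ (E *ᵥ q)| ≤ w * tq := by
          rw [hsymE (u i) q]
          calc |q ⬝ᵥ (E *ᵥ u i)| ≤ vecNorm q * vecNorm (E *ᵥ u i) := abs_dot_le' _ _
            _ ≤ vecNorm (E *ᵥ u i) * tq := by rw [htq, mul_comm]
            _ ≤ w * tq := mul_le_mul_of_nonneg_right (hwub i hi) htq0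
        calc cR i * (u i ⬝ᵥ (E *ᵥ q)) ≤ |cR i * (u i ⬝ᵥ (E *ᵥ q))| := le_abs_self _
          _ = |cR i| * |u i ⬝ᵥ (E *ᵥ q)| := abs_mul _ _
          _ ≤ |cR i| * (w * tq) := mul_le_mul_of_nonneg_left habs (abs_nonneg _)
      · simp [hcR, if_neg hi]
    calc ∑ i, cR i * (u i ⬝ᵥ (E *ᵥ q)) ≤ ∑ i, |cR i| * (w * tq) :=
          Finset.sum_le_sum fun i _ => hub i
      _ = T * (w * tq) := by rw [← Finset.sum_mul, hTabs]
  have hqpE : q ⬝ᵥ (E *ᵥ p) ≤ T * (w * tq) := by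
    rw [hsymE q p]; exact hpqE
  have hqqE : q ⬝ᵥ (E *ᵥ q) ≤ matOpNorm E * sig := by
    calc q ⬝ᵥ (E *ᵥ q) ≤ |q ⬝ᵥ (E *ᵥ q)| := le_abs_self _
      _ ≤ vecNorm q * vecNorm (E *ᵥ q) := abs_dot_le' _ _
      _ ≤ vecNorm q * (matOpNorm E * vecNorm q) :=
          mul_le_mul_of_nonneg_left (vecNorm_mulVec_le' E q) (vecNorm_nonneg' q)
      _ = matOpNorm E * tq ^ 2 := by rw [htq]; ring
      _ = matOpNorm E * sig := by rw [htq2]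
  have hEpart : v ⬝ᵥ (E *ᵥ v) ≤ x * T ^ 2 + 2 * (T * (w * tq)) + matOpNorm E * sig := by
    rw [hvpq, Matrix.mulVec_add, add_dotProduct, dotProduct_add,
      dotProduct_add]
    linarith
  -- final arithmetic
  have hmain : tlam i0 - lam i0 ≤ x * T ^ 2 + 2 * (T * (w * tq)) + matOpNorm E * sig
      - lambar * sig := by
    rw [htlval]; linarith
  have hE24 : matOpNorm E ≤ lambar / 24 := by linarith
  show tlam i0 - lam i0 ≤ M
  exact final_arith _ _ x T w tq (matOpNorm E) sig s lambar M r hlambar hx0 hw0 hT0 htq0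
    hsig0 hs0 hE0 hE24 hr0 hM0 hmain htq2 hT2 hssig hxM hwM
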